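/- Let G be a graph and let P be a nonempty biclique of G, and let B_P denote the family of maximal bicliques of G containing P. A vertex v belongs to the intersection of all members of B_P if and only if for every vertex w with P ∪ {w} a biclique of G, the set P ∪ {v,w} is also a biclique of G. In particular, the intersection of all members of B_P is a biclique of G containing P. -/

import Mathlib

/-- A biclique of a graph `G` is a set of vertices inducing a complete bipartite graph,
where edgeless graphs are regarded as complete bipartite. -/
def IsBiclique {V : Type*} (G : SimpleGraph V) (s : Set V) : Prop :=
  ∃ X Y : Set V, X ∪ Y = s ∧ Disjoint X Y ∧
    (∀ a ∈ X, ∀ b ∈ X, ¬ G.Adj a b) ∧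
    (∀ a ∈ Y, ∀ b ∈ Y, ¬ G.Adj a b) ∧
    (∀ a ∈ X, ∀ b ∈ Y, G.Adj a b)

/-- The family of maximal bicliques of `G` containing the set `P`. -/
def maxBicliquesOver {V : Type*} (G : SimpleGraph V) (P : Set V) : Set (Set V) :=
  {B : Set V | IsBiclique G B ∧ (∀ C, IsBiclique G C → B ⊆ C → B = C) ∧ P ⊆ B}

lemma biclique_subset {V : Type*} {G : SimpleGraph V} {s t : Set V}
    (h : IsBiclique G s) (hts : t ⊆ s) : IsBiclique G t := by
  obtain ⟨X, Y, hXY, hdisj, hX, hY, hadj⟩ := h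
  refine ⟨X ∩ t, Y ∩ t, ?_, ?_, ?_, ?_, ?_⟩
  · rw [← Set.union_inter_distrib_right, hXY, Set.inter_eq_self_of_subset_right hts]
  · exact hdisj.mono Set.inter_subset_left Set.inter_subset_left
  · exact fun a ha b hb => hX a ha.1 b hb.1
  · exact fun a ha b hb => hY a ha.1 b hb.1
  · exact fun a ha b hb => hadj a ha.1 b hb.1

lemma biclique_formula {V : Type*} {G : SimpleGraph V} {s : Set V} {p : V}
    (h : IsBiclique G s) (hp : p ∈ s) :
    ∀ a ∈ s, ∀ b ∈ s, G.Adj a b ↔ ¬ (G.Adj a p ↔ G.Adj b p) := by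
  obtain ⟨X, Y, hXY, hdisj, hX, hY, hadj⟩ := h
  have hmem : ∀ x ∈ s, x ∈ X ∨ x ∈ Y := fun x hx => by rw [← hXY] at hx; exact hx
  intro a ha b hb
  rcases hmem p hp with hp' | hp' <;> rcases hmem a ha with ha' | ha' <;>
    rcases hmem b hb with hb' | hb'
  · have h1 := hX a ha' b hb'
    have h2 := hX a ha' p hp'
    have h3 := hX b hb' p hp'
    tauto
  · have h1 : G.Adj a b := hadj a ha' b hb'
    have h2 := hX a ha' p hp'
    have h3 : G.Adj b p := (hadj p hp' b hb').symm
    tauto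
  · have h1 : G.Adj a b := (hadj b hb' a ha').symm
    have h2 : G.Adj a p := (hadj p hp' a ha').symm
    have h3 := hX b hb' p hp'
    tauto
  · have h1 := hY a ha' b hb'
    have h2 : G.Adj a p := (hadj p hp' a ha').symm
    have h3 : G.Adj b p := (hadj p hp' b hb').symm
    tauto
  · have h1 := hX a ha' b hb'
    have h2 : G.Adj a p := hadj a ha' p hp'
    have h3 : G.Adj b p := hadj b hb' p hp'
    tauto
  · have h1 : G.Adj a b := hadj a ha' b hb'
    have h2 : G.Adj a p := hadj a ha' p hp'
    have h3 := hY b hb' p hp'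
    tauto
  · have h1 : G.Adj a b := (hadj b hb' a ha').symm
    have h2 := hY a ha' p hp'
    have h3 : G.Adj b p := hadj b hb' p hp'
    tauto
  · have h1 := hY a ha' b hb'
    have h2 := hY a ha' p hp'
    have h3 := hY b hb' p hp'
    tauto

lemma biclique_of_formula {V : Type*} {G : SimpleGraph V} {s : Set V} {p : V}
    (h : ∀ a ∈ s, ∀ b ∈ s, G.Adj a b ↔ ¬ (G.Adj a p ↔ G.Adj b p)) :
    IsBiclique G s := by
  refine ⟨{a ∈ s | ¬ G.Adj a p}, {a ∈ s | G.Adj a p}, ?_, ?_, ?_, ?_, ?_⟩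
  · ext x; simp only [Set.mem_union, Set.mem_setOf_eq]; tauto
  · rw [Set.disjoint_left]; rintro x ⟨_, hx⟩ ⟨_, hx'⟩; exact hx hx'
  · intro a ha b hb; rw [h a ha.1 b hb.1]
    have := ha.2; have := hb.2; tauto
  · intro a ha b hb; rw [h a ha.1 b hb.1]
    have := ha.2; have := hb.2; tauto
  · intro a ha b hb; rw [h a ha.1 b hb.1]
    have := ha.2; have := hb.2; tauto

lemma exists_max_biclique {V : Type*} [Fintype V] (G : SimpleGraph V) {s : Set V}
    (hs : IsBiclique G s) : ∃ B, B ∈ maxBicliquesOver G s := by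
  classical
  set T : Set (Set V) := {C | IsBiclique G C ∧ s ⊆ C} with hT
  have hfin : T.Finite := Set.toFinite T
  have hne : T.Nonempty := ⟨s, hs, subset_rfl⟩
  obtain ⟨B, hBT, hmax⟩ := Set.Finite.exists_maximal hfin hne
  refine ⟨B, hBT.1, ?_, hBT.2⟩
  intro C hC hBC
  exact le_antisymm hBC (hmax ⟨hC, hBT.2.trans hBC⟩ hBC)

theorem stmt18 {V : Type*} [Fintype V] (G : SimpleGraph V) (P : Set V)
    (hne : P.Nonempty) (hP : IsBiclique G P) :
    (∀ v : V, v ∈ ⋂ B ∈ maxBicliquesOver G P, B ↔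
      ∀ w : V, IsBiclique G (P ∪ {w}) → IsBiclique G (P ∪ {v, w})) ∧
    IsBiclique G (⋂ B ∈ maxBicliquesOver G P, B) ∧
    P ⊆ ⋂ B ∈ maxBicliquesOver G P, B := by
  obtain ⟨p, hpP⟩ := hne
  obtain ⟨B₀, hB₀⟩ := exists_max_biclique G hP
  have hPsub : P ⊆ ⋂ B ∈ maxBicliquesOver G P, B := by
    intro x hx
    simp only [Set.mem_iInter]
    exact fun B hB => hB.2.2 hx
  have hIsub : (⋂ B ∈ maxBicliquesOver G P, B) ⊆ B₀ := by
    intro x hx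
    simp only [Set.mem_iInter] at hx
    exact hx B₀ hB₀
  refine ⟨?_, biclique_subset hB₀.1 hIsub, hPsub⟩
  intro v
  constructor
  · intro hv w hw
    obtain ⟨B, hB⟩ := exists_max_biclique G hw
    have hBP : B ∈ maxBicliquesOver G P :=
      ⟨hB.1, hB.2.1, Set.subset_union_left.trans hB.2.2⟩
    simp only [Set.mem_iInter] at hv
    have hvB : v ∈ B := hv B hBP
    have hwB : w ∈ B := hB.2.2 (Set.mem_union_right _ rfl)
    apply biclique_subset hB.1
    apply Set.union_subset hBP.2.2
    intro x hx
    rcases hx with rfl | hx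
    · exact hvB
    · rw [Set.mem_singleton_iff] at hx; subst hx; exact hwB
  · intro H
    simp only [Set.mem_iInter]
    rintro B ⟨hBbic, hBmax, hPB⟩
    have hpB : p ∈ B := hPB hpP
    have hform := biclique_formula hBbic hpB
    have hvw : ∀ w ∈ B, (G.Adj v w ↔ ¬(G.Adj v p ↔ G.Adj w p)) := by
      intro w hwB
      have h1 : IsBiclique G (P ∪ {w}) :=
        biclique_subset hBbic (Set.union_subset hPB (by simpa using hwB))
      have h2 := H w h1
      have h3 := biclique_formula h2 (Set.mem_union_left _ hpP)
      exact h3 v (Set.mem_union_right _ (Set.mem_insert _ _)) w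
        (Set.mem_union_right _ (Set.mem_insert_iff.mpr (Or.inr rfl)))
    have key : ∀ a ∈ B ∪ {v}, ∀ b ∈ B ∪ {v}, G.Adj a b ↔ ¬(G.Adj a p ↔ G.Adj b p) := by
      intro a ha b hb
      rcases ha with ha | ha <;> rcases hb with hb | hb
      · exact hform a ha b hb
      · rw [Set.mem_singleton_iff] at hb; subst hb
        rw [G.adj_comm, hvw a ha]; tauto
      · rw [Set.mem_singleton_iff] at ha; subst ha
        exact hvw b hb
      · rw [Set.mem_singleton_iff] at ha hb; subst ha; subst hb
        simp [G.irrefl]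
    have hbv : IsBiclique G (B ∪ {v}) := biclique_of_formula key
    have heq : B = B ∪ {v} := hBmax _ hbv Set.subset_union_left
    rw [heq]
    exact Set.mem_union_right _ rfl
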